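/- Let p be a prime and let T : ℤ_p → ℤ_p be a 1-Lipschitz map on the p-adic integers, i.e. |T x − T y|_p ≤ |x − y|_p for all x, y ∈ ℤ_p. Then T preserves the normalized Haar probability measure on ℤ_p if and only if T is surjective, and in that case T is an isometry: |T x − T y|_p = |x − y|_p for all x, y ∈ ℤ_p. -/

import Mathlib

open MeasureTheory
open ENNReal

noncomputable instance (p : ℕ) [Fact p.Prime] : MeasurableSpace ℤ_[p] := borel _
instance (p : ℕ) [Fact p.Prime] : BorelSpace ℤ_[p] := ⟨rfl⟩

variable {p : ℕ} [hp : Fact p.Prime]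

lemma aux_keyEq (n : ℕ) (x y : ℤ_[p]) :
    PadicInt.toZModPow n x = PadicInt.toZModPow n y ↔ ‖x - y‖ ≤ (p:ℝ) ^ (-(n:ℤ)) := by
  rw [PadicInt.norm_le_pow_iff_mem_span_pow, ← PadicInt.ker_toZModPow, RingHom.mem_ker,
    map_sub, sub_eq_zero]

lemma aux_cast_eq (n : ℕ) (c : ZMod (p ^ n)) :
    PadicInt.toZModPow n ((c.val : ℕ) : ℤ_[p]) = c := by
  rw [map_natCast, ZMod.natCast_zmod_val]

lemma aux_ball_eq (n : ℕ) (c : ZMod (p ^ n)) :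
    (PadicInt.toZModPow (p := p) n) ⁻¹' {c}
      = Metric.closedBall ((c.val : ℕ) : ℤ_[p]) ((p:ℝ) ^ (-(n:ℤ))) := by
  ext x
  simp only [Set.mem_preimage, Set.mem_singleton_iff, Metric.mem_closedBall, dist_eq_norm]
  rw [← aux_keyEq, aux_cast_eq]

lemma aux_eq_zero (z : ℤ_[p]) (h : ∀ n : ℕ, ‖z‖ ≤ (p:ℝ) ^ (-(n:ℤ))) : z = 0 := by
  by_contra hz
  have hnorm : 0 < ‖z‖ := norm_pos_iff.mpr hz
  have hp1 : 1 < (p:ℝ) := by exact_mod_cast hp.out.one_lt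
  obtain ⟨n, hn⟩ := pow_unbounded_of_one_lt (‖z‖⁻¹) hp1
  have h2 := h n
  rw [zpow_neg, zpow_natCast] at h2
  have hpn : (0:ℝ) < (p:ℝ)^n := by positivity
  have h3 : ((p:ℝ)^n)⁻¹ < ‖z‖ := by
    rw [inv_lt_comm₀ hpn hnorm]
    exact hn
  exact absurd (lt_of_le_of_lt h2 h3) (lt_irrefl _)

lemma aux_meas (n : ℕ) (c : ZMod (p ^ n)) :
    MeasurableSet ((PadicInt.toZModPow (p := p) n) ⁻¹' {c}) := by
  rw [aux_ball_eq]; exact measurableSet_closedBall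

lemma aux_ball_translate (μ : Measure ℤ_[p]) [μ.IsAddHaarMeasure] (n : ℕ)
    (c d : ZMod (p ^ n)) :
    μ ((PadicInt.toZModPow n) ⁻¹' {c}) = μ ((PadicInt.toZModPow n) ⁻¹' {d}) := by
  have : (PadicInt.toZModPow (p := p) n) ⁻¹' {c}
      = (fun x => (((d.val : ℕ) : ℤ_[p]) - ((c.val : ℕ) : ℤ_[p])) + x) ⁻¹'
        ((PadicInt.toZModPow n) ⁻¹' {d}) := by
    ext x
    simp only [Set.mem_preimage, Set.mem_singleton_iff, map_add, map_sub, aux_cast_eq]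
    constructor
    · intro h; rw [h]; ring
    · intro h; linear_combination h
  rw [this, measure_preimage_add]

lemma aux_measure_ball (μ : Measure ℤ_[p]) [μ.IsAddHaarMeasure] [IsProbabilityMeasure μ]
    (n : ℕ) (c : ZMod (p ^ n)) :
    μ ((PadicInt.toZModPow n) ⁻¹' {c}) = ((p : ℝ≥0∞) ^ n)⁻¹ := by
  haveI : NeZero (p ^ n) := ⟨pow_ne_zero n hp.out.ne_zero⟩
  have hunion : (Set.univ : Set ℤ_[p]) = ⋃ d : ZMod (p ^ n), (PadicInt.toZModPow n) ⁻¹' {d} := by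
    ext x; simp
  have hdisj : Pairwise (Function.onFun Disjoint
      (fun d : ZMod (p ^ n) => (PadicInt.toZModPow (p := p) n) ⁻¹' {d})) := by
    intro a b hab
    simp only [Function.onFun, Set.disjoint_left]
    rintro x hxa hxb
    exact hab (hxa.symm.trans hxb)
  have h1 : (1 : ℝ≥0∞) = ∑' d : ZMod (p ^ n), μ ((PadicInt.toZModPow n) ⁻¹' {d}) := by
    rw [← measure_iUnion hdisj (fun d => aux_meas n d), ← hunion, measure_univ]
  have h2 : ∀ d : ZMod (p ^ n), μ ((PadicInt.toZModPow n) ⁻¹' {d})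
      = μ ((PadicInt.toZModPow n) ⁻¹' {c}) := fun d => aux_ball_translate μ n d c
  rw [tsum_fintype] at h1
  simp only [h2, Finset.sum_const, Finset.card_univ, ZMod.card, nsmul_eq_mul] at h1
  have hc0 : ((p : ℝ≥0∞) ^ n) ≠ 0 := by
    simp [pow_ne_zero, hp.out.ne_zero]
  have hctop : ((p : ℝ≥0∞) ^ n) ≠ ⊤ := by
    exact ENNReal.pow_ne_top (ENNReal.natCast_ne_top p)
  have hcast : ((p ^ n : ℕ) : ℝ≥0∞) = (p : ℝ≥0∞) ^ n := by push_cast; ring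
  rw [hcast] at h1
  calc μ ((PadicInt.toZModPow n) ⁻¹' {c})
      = ((p : ℝ≥0∞) ^ n)⁻¹ * ((p : ℝ≥0∞) ^ n * μ ((PadicInt.toZModPow n) ⁻¹' {c})) := by
        rw [← mul_assoc, ENNReal.inv_mul_cancel hc0 hctop, one_mul]
    _ = ((p : ℝ≥0∞) ^ n)⁻¹ := by rw [← h1, mul_one]

section T
variable (T : ℤ_[p] → ℤ_[p])

/-- The induced map on `ZMod (p ^ n)`. -/
noncomputable def Tbar (n : ℕ) (c : ZMod (p ^ n)) : ZMod (p ^ n) :=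
  PadicInt.toZModPow n (T ((c.val : ℕ) : ℤ_[p]))

lemma Tbar_compat (hlip : ∀ x y : ℤ_[p], ‖T x - T y‖ ≤ ‖x - y‖) (n : ℕ) (x : ℤ_[p]) :
    PadicInt.toZModPow n (T x) = Tbar T n (PadicInt.toZModPow n x) := by
  rw [Tbar, aux_keyEq]
  exact le_trans (hlip _ _) ((aux_keyEq n x _).mp (by rw [aux_cast_eq]))

lemma Tbar_surj (hlip : ∀ x y : ℤ_[p], ‖T x - T y‖ ≤ ‖x - y‖) (hs : Function.Surjective T) (n : ℕ) :
    Function.Bijective (Tbar T n) := by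
  rw [Fintype.bijective_iff_surjective_and_card]
  refine ⟨fun c => ?_, rfl⟩
  obtain ⟨x, hx⟩ := hs ((c.val : ℕ) : ℤ_[p])
  exact ⟨PadicInt.toZModPow n x, by rw [← Tbar_compat T hlip, hx, aux_cast_eq]⟩

lemma aux_isometry (hlip : ∀ x y : ℤ_[p], ‖T x - T y‖ ≤ ‖x - y‖) (hs : Function.Surjective T) (x y : ℤ_[p]) :
    ‖T x - T y‖ = ‖x - y‖ := by
  refine le_antisymm (hlip x y) ?_
  have key : ∀ n : ℕ, ‖T x - T y‖ ≤ (p:ℝ) ^ (-(n:ℤ)) → ‖x - y‖ ≤ (p:ℝ) ^ (-(n:ℤ)) := by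
    intro n hn
    rw [← aux_keyEq] at hn ⊢
    rw [Tbar_compat T hlip, Tbar_compat T hlip] at hn
    exact (Tbar_surj T hlip hs n).injective hn
  by_cases hz : T x - T y = 0
  · have : x - y = 0 := by
      apply aux_eq_zero
      intro n
      exact key n (by rw [hz, norm_zero]; positivity)
    rw [hz, this]
  · obtain ⟨m, hm⟩ : ∃ m : ℕ, ‖T x - T y‖ = (p:ℝ) ^ (-(m:ℤ)) := by
      refine ⟨(T x - T y).valuation, ?_⟩
      exact PadicInt.norm_eq_zpow_neg_valuation hz
    rw [hm]
    exact key m (le_of_eq hm)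
end T

lemma aux_mp_surj (μ : Measure ℤ_[p]) [μ.IsAddHaarMeasure] [IsProbabilityMeasure μ]
    (T : ℤ_[p] → ℤ_[p]) (hlip : ∀ x y : ℤ_[p], ‖T x - T y‖ ≤ ‖x - y‖)
    (hMP : ∀ S : Set ℤ_[p], MeasurableSet S → μ (T ⁻¹' S) = μ S) :
    Function.Surjective T := by
  have hTcont : Continuous T := by
    have : LipschitzWith 1 T := by
      intro x y
      rw [edist_dist, edist_dist, dist_eq_norm, dist_eq_norm]
      simp only [ENNReal.coe_one, one_mul]
      exact ENNReal.ofReal_le_ofReal (hlip x y)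
    exact this.continuous
  intro a
  set K : ℕ → Set ℤ_[p] :=
    fun n => T ⁻¹' ((PadicInt.toZModPow n) ⁻¹' {PadicInt.toZModPow n a}) with hK
  have hKne : ∀ n, (K n).Nonempty := by
    intro n
    apply nonempty_of_measure_ne_zero (μ := μ)
    rw [hMP _ (aux_meas n _), aux_measure_ball]
    simp [pow_ne_zero, hp.out.ne_zero, ENNReal.pow_ne_top, ENNReal.natCast_ne_top]
  have hKclosed : ∀ n, IsClosed (K n) := by
    intro n
    rw [hK]
    apply IsClosed.preimage hTcont
    rw [aux_ball_eq]
    exact Metric.isClosed_closedBall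
  have hKmono : ∀ n, K (n + 1) ⊆ K n := by
    intro n x hx
    simp only [hK, Set.mem_preimage, Set.mem_singleton_iff] at hx ⊢
    rw [aux_keyEq] at hx ⊢
    refine le_trans hx (zpow_le_zpow_right₀ (by exact_mod_cast hp.out.one_le) ?_)
    push_cast; omega
  obtain ⟨x, hx⟩ := IsCompact.nonempty_iInter_of_sequence_nonempty_isCompact_isClosed
    K hKmono hKne ((hKclosed 0).isCompact) hKclosed
  refine ⟨x, ?_⟩
  have : T x - a = 0 := by
    apply aux_eq_zero
    intro n
    have hxn := Set.mem_iInter.mp hx n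
    simp only [hK, Set.mem_preimage, Set.mem_singleton_iff] at hxn
    rwa [aux_keyEq] at hxn
  exact sub_eq_zero.mp this

/-- The collection of all "balls" (preimages of points under `toZModPow`). -/
def ballCol (p : ℕ) [Fact p.Prime] : Set (Set ℤ_[p]) :=
  ⋃ n : ℕ, Set.range (fun c : ZMod (p ^ n) => (PadicInt.toZModPow n) ⁻¹' {c})

lemma ballCol_countable : (ballCol p).Countable :=
  Set.countable_iUnion fun n => (Set.finite_range _).countable

lemma aux_ball_subset {n m : ℕ} (hnm : n ≤ m) (c : ZMod (p ^ n)) (d : ZMod (p ^ m))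
    (hne : ((PadicInt.toZModPow n) ⁻¹' {c} ∩ (PadicInt.toZModPow (p := p) m) ⁻¹' {d}).Nonempty) :
    (PadicInt.toZModPow (p := p) m) ⁻¹' {d} ⊆ (PadicInt.toZModPow n) ⁻¹' {c} := by
  obtain ⟨z, hzc, hzd⟩ := hne
  simp only [Set.mem_preimage, Set.mem_singleton_iff] at hzc hzd
  intro x hx
  simp only [Set.mem_preimage, Set.mem_singleton_iff] at hx ⊢
  have : PadicInt.toZModPow n x = PadicInt.toZModPow n z := by
    rw [aux_keyEq]
    refine le_trans ?_ (zpow_le_zpow_right₀ (by exact_mod_cast hp.out.one_le)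
      (by push_cast; omega : -(m:ℤ) ≤ -(n:ℤ)))
    rw [← aux_keyEq]
    rw [hx, hzd]
  rw [this, hzc]

lemma ballCol_pi : IsPiSystem (ballCol p) := by
  rintro s hs t ht hne
  simp only [ballCol, Set.mem_iUnion, Set.mem_range] at hs ht ⊢
  obtain ⟨n, c, rfl⟩ := hs
  obtain ⟨m, d, rfl⟩ := ht
  rcases le_total n m with h | h
  · rw [Set.inter_eq_right.mpr (aux_ball_subset h c d hne)]
    exact ⟨m, d, rfl⟩
  · rw [Set.inter_eq_left.mpr (aux_ball_subset h d c (by rwa [Set.inter_comm]))]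
    exact ⟨n, c, rfl⟩

lemma ballCol_gen :
    (inferInstance : MeasurableSpace ℤ_[p]) = MeasurableSpace.generateFrom (ballCol p) := by
  apply le_antisymm
  · show borel ℤ_[p] ≤ _
    refine MeasurableSpace.generateFrom_le fun U hU => ?_
    replace hU : IsOpen U := hU
    have hUeq : U = ⋃₀ {B | B ∈ ballCol p ∧ B ⊆ U} := by
      apply Set.Subset.antisymm
      · intro x hxU
        obtain ⟨ε, hε, hball⟩ := Metric.isOpen_iff.mp hU x hxU
        have hp1 : 1 < (p:ℝ) := by exact_mod_cast hp.out.one_lt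
        obtain ⟨n, hn⟩ := pow_unbounded_of_one_lt (ε⁻¹) hp1
        have hlt : (p:ℝ) ^ (-(n:ℤ)) < ε := by
          rw [zpow_neg, zpow_natCast, inv_lt_comm₀ (by positivity) hε]
          exact hn
        refine ⟨(PadicInt.toZModPow n) ⁻¹' {PadicInt.toZModPow n x}, ⟨?_, ?_⟩, rfl⟩
        · exact Set.mem_iUnion.mpr ⟨n, ⟨PadicInt.toZModPow n x, rfl⟩⟩
        · intro y hy
          simp only [Set.mem_preimage, Set.mem_singleton_iff] at hy
          apply hball
          rw [Metric.mem_ball, dist_eq_norm]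
          exact lt_of_le_of_lt ((aux_keyEq n y x).mp hy) hlt
      · rintro x ⟨B, ⟨_, hBU⟩, hxB⟩
        exact hBU hxB
    rw [hUeq]
    refine MeasurableSet.sUnion (ballCol_countable.mono (Set.sep_subset _ _))
      fun B hB => MeasurableSpace.measurableSet_generateFrom hB.1
  · refine MeasurableSpace.generateFrom_le fun B hB => ?_
    simp only [ballCol, Set.mem_iUnion, Set.mem_range] at hB
    obtain ⟨n, c, rfl⟩ := hB
    exact aux_meas n c

lemma aux_preimage_ball (T : ℤ_[p] → ℤ_[p]) (hlip : ∀ x y : ℤ_[p], ‖T x - T y‖ ≤ ‖x - y‖)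
    (hs : Function.Surjective T) (n : ℕ) (c : ZMod (p ^ n)) :
    T ⁻¹' ((PadicInt.toZModPow n) ⁻¹' {c}) =
      (PadicInt.toZModPow n) ⁻¹' {(Equiv.ofBijective _ (Tbar_surj T hlip hs n)).symm c} := by
  ext x
  simp only [Set.mem_preimage, Set.mem_singleton_iff]
  rw [Tbar_compat T hlip]
  constructor
  · intro h
    rw [← h]
    exact (Equiv.symm_apply_apply (Equiv.ofBijective _ (Tbar_surj T hlip hs n)) _).symm
  · intro h
    have := congrArg (Tbar T n) h
    rwa [show Tbar T n ((Equiv.ofBijective _ (Tbar_surj T hlip hs n)).symm c)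
      = c from Equiv.apply_symm_apply (Equiv.ofBijective _ (Tbar_surj T hlip hs n)) c] at this

theorem stmt8 {p : ℕ} [Fact p.Prime]
    (μ : Measure ℤ_[p]) [μ.IsAddHaarMeasure] [IsProbabilityMeasure μ]
    (T : ℤ_[p] → ℤ_[p]) (hlip : ∀ x y : ℤ_[p], ‖T x - T y‖ ≤ ‖x - y‖) :
    ((∀ S : Set ℤ_[p], MeasurableSet S → μ (T ⁻¹' S) = μ S) ↔ Function.Surjective T) ∧
    (Function.Surjective T → ∀ x y : ℤ_[p], ‖T x - T y‖ = ‖x - y‖) := by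
  have hTcont : Continuous T := by
    have : LipschitzWith 1 T := by
      intro x y
      rw [edist_dist, edist_dist, dist_eq_norm, dist_eq_norm]
      simp only [ENNReal.coe_one, one_mul]
      exact ENNReal.ofReal_le_ofReal (hlip x y)
    exact this.continuous
  have hTmeas : Measurable T := hTcont.measurable
  refine ⟨⟨aux_mp_surj μ T hlip, ?_⟩, fun hs x y => aux_isometry T hlip hs x y⟩
  intro hs S hS
  have hν : ∀ s : Set ℤ_[p], MeasurableSet s → μ.map T s = μ (T ⁻¹' s) :=
    fun s h => Measure.map_apply hTmeas h
  haveI hprob : IsProbabilityMeasure (μ.map T) := Measure.isProbabilityMeasure_map hTmeas.aemeasurable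
  have hext : μ.map T = μ := by
    refine ext_of_generate_finite (ballCol p) ballCol_gen ballCol_pi ?_ ?_
    · intro s hsC
      simp only [ballCol, Set.mem_iUnion, Set.mem_range] at hsC
      obtain ⟨n, c, rfl⟩ := hsC
      rw [hν _ (aux_meas n c), aux_preimage_ball T hlip hs, aux_measure_ball, aux_measure_ball]
    · rw [measure_univ, measure_univ]
  rw [← hν S hS, hext]
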